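/- arXiv:2104.04321 — 4 statements merged into one kernel-verified Lean document; each statement's English description precedes it below -/
import Mathlib

section
/- Let n, r, q be positive integers, let P31 ∈ ℝ^{r×r} be a symmetric positive definite matrix, and let P11 ∈ ℝ^{n×n}, P21 ∈ ℝ^{n×r}, H ∈ ℝ^{q×n} be arbitrary real matrices. Define f(Hr) := tr(H P11 Hᵀ − 2 Hr P21ᵀ Hᵀ + Hr P31 Hrᵀ) for Hr ∈ ℝ^{q×r}. Then for every Hr ∈ ℝ^{q×r}, f(Hr) ≥ f(H P21 P31⁻¹); i.e., the choice Hr = H P21 P31⁻¹ globally minimizes f. -/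
open Matrix

/-- The choice `Hr = H * P21 * P31⁻¹` globally minimizes
`f(Hr) = tr(H P11 Hᵀ − 2 Hr P21ᵀ Hᵀ + Hr P31 Hrᵀ)`. -/
theorem stmt0 {n r q : ℕ} (hn : 0 < n) (hr : 0 < r) (hq : 0 < q)
    (P31 : Matrix (Fin r) (Fin r) ℝ) (hP31 : P31.PosDef)
    (P11 : Matrix (Fin n) (Fin n) ℝ) (P21 : Matrix (Fin n) (Fin r) ℝ)
    (H : Matrix (Fin q) (Fin n) ℝ)
    (f : Matrix (Fin q) (Fin r) ℝ → ℝ)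
    (hf : ∀ Hr : Matrix (Fin q) (Fin r) ℝ,
      f Hr = (H * P11 * Hᵀ - (2 : ℝ) • (Hr * P21ᵀ * Hᵀ) + Hr * P31 * Hrᵀ).trace) :
    ∀ Hr : Matrix (Fin q) (Fin r) ℝ, f (H * P21 * P31⁻¹) ≤ f Hr := by
  intro Hr
  set K : Matrix (Fin q) (Fin r) ℝ := H * P21 * P31⁻¹ with hKdef
  have hdet : IsUnit P31.det := isUnit_iff_ne_zero.mpr (ne_of_gt hP31.det_pos)
  have hsym : P31ᵀ = P31 := by
    have := hP31.isHermitian.eq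
    simpa [Matrix.conjTranspose_eq_transpose_of_trivial] using this
  have hinvsym : (P31⁻¹)ᵀ = P31⁻¹ := by
    rw [Matrix.transpose_nonsing_inv, hsym]
  -- key: P31 * Kᵀ = P21ᵀ * Hᵀ
  have hkey : P31 * Kᵀ = P21ᵀ * Hᵀ := by
    rw [hKdef, Matrix.transpose_mul, hinvsym, ← Matrix.mul_assoc,
      Matrix.mul_nonsing_inv _ hdet, Matrix.one_mul, Matrix.transpose_mul]
  have hD : ((Hr - K) * P31 * (Hr - K)ᵀ).PosSemidef := by
    have := hP31.posSemidef.mul_mul_conjTranspose_same (Hr - K)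
    simpa [Matrix.conjTranspose_eq_transpose_of_trivial, Matrix.transpose] using this
  have htr : ((Hr - K) * P31 * (Hr - K)ᵀ).trace = f Hr - f K := by
    rw [hf, hf]
    have e1 : Hr * P31 * Kᵀ = Hr * P21ᵀ * Hᵀ := by
      rw [Matrix.mul_assoc, hkey, Matrix.mul_assoc]
    have e2 : K * P31 * Kᵀ = K * P21ᵀ * Hᵀ := by
      rw [Matrix.mul_assoc, hkey]; simp [hKdef, Matrix.mul_assoc]
    have e3 : (K * P31 * Hrᵀ).trace = (Hr * P21ᵀ * Hᵀ).trace := by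
      rw [← Matrix.trace_transpose, Matrix.transpose_mul, Matrix.transpose_mul,
        Matrix.transpose_transpose, hsym, ← Matrix.mul_assoc, e1]
    have expand : (Hr - K) * P31 * (Hr - K)ᵀ
        = Hr * P31 * Hrᵀ - Hr * P31 * Kᵀ - K * P31 * Hrᵀ + K * P31 * Kᵀ := by
      rw [Matrix.transpose_sub, Matrix.sub_mul, Matrix.sub_mul, Matrix.mul_sub,
        Matrix.mul_sub]
      abel
    rw [expand]
    simp only [Matrix.trace_add, Matrix.trace_sub, Matrix.trace_smul, e1, e2, e3,
      smul_eq_mul]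
    ring
  have hnn : 0 ≤ ((Hr - K) * P31 * (Hr - K)ᵀ).trace := by
    rw [Matrix.trace]
    apply Finset.sum_nonneg
    intro i _
    have := hD.diag_nonneg (i := i)
    simpa [Matrix.mulVec, dotProduct, Pi.single_apply, Matrix.diag] using this
  linarith [htr, hnn]
end

section
/- Let D, K ∈ ℝ^{n×n} be symmetric positive definite, let P21 ∈ ℝ^{n×r} have full column rank r ≤ n, and let P31 ∈ ℝ^{r×r} be symmetric positive definite. Define W := P21 P31⁻¹, D̂r := Wᵀ D W, and K̂r := Wᵀ K W. Then D̂r and K̂r are symmetric positive definite, and the 2r×2r block matrix [[0, I_r], [−K̂r, −D̂r]] is Hurwitz (the reduced second-order model is asymptotically stable). -/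
open Matrix

lemma cplx_pos' {k : ℕ} (M : Matrix (Fin k) (Fin k) ℝ) (hM : M.PosDef) {z : Fin k → ℂ} (hz : z ≠ 0) :
    ∃ c : ℝ, 0 < c ∧ star z ⬝ᵥ ((M.map Complex.ofReal) *ᵥ z) = (c : ℝ) := by
  set a : Fin k → ℝ := fun i => (z i).re with ha
  set b : Fin k → ℝ := fun i => (z i).im with hb
  have hMT : Mᵀ = M := (by simpa using hM.1 : M.IsSymm).eq
  have hsym : b ⬝ᵥ M *ᵥ a = a ⬝ᵥ M *ᵥ b := by
    rw [dotProduct_mulVec, ← mulVec_transpose, hMT, dotProduct_comm]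
  have key : star z ⬝ᵥ ((M.map Complex.ofReal) *ᵥ z)
      = Complex.mk (a ⬝ᵥ M *ᵥ a + b ⬝ᵥ M *ᵥ b) (a ⬝ᵥ M *ᵥ b - b ⬝ᵥ M *ᵥ a) := by
    apply Complex.ext <;>
    · simp only [dotProduct, mulVec, map_apply, Pi.star_apply, Finset.mul_sum,
        Complex.re_sum, Complex.im_sum, Complex.mul_re, Complex.mul_im, Complex.ofReal_re,
        Complex.ofReal_im, RCLike.star_def, Complex.conj_re, Complex.conj_im,
        ← Finset.sum_add_distrib, ← Finset.sum_sub_distrib]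
      exact Finset.sum_congr rfl fun x _ => Finset.sum_congr rfl fun j _ => by ring
  refine ⟨a ⬝ᵥ M *ᵥ a + b ⬝ᵥ M *ᵥ b, ?_, by
    rw [key, hsym]; apply Complex.ext <;> simp⟩
  have hab : a ≠ 0 ∨ b ≠ 0 := by
    by_contra h
    push_neg at h
    apply hz
    funext i
    have h1 := congrFun h.1 i
    have h2 := congrFun h.2 i
    simp [ha, hb] at h1 h2 ⊢
    exact Complex.ext h1 h2
  have hsa : 0 ≤ a ⬝ᵥ M *ᵥ a := by simpa [star_trivial] using hM.posSemidef.dotProduct_mulVec_nonneg a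
  have hsb : 0 ≤ b ⬝ᵥ M *ᵥ b := by simpa [star_trivial] using hM.posSemidef.dotProduct_mulVec_nonneg b
  rcases hab with h | h
  · have := hM.dotProduct_mulVec_pos h; rw [star_trivial] at this; positivity
  · have := hM.dotProduct_mulVec_pos h; rw [star_trivial] at this; positivity

lemma posdef_conj {n r : ℕ} {M : Matrix (Fin n) (Fin n) ℝ} (hM : M.PosDef)
    {W : Matrix (Fin n) (Fin r) ℝ} (hWi : Function.Injective W.mulVec) :
    (Wᵀ * M * W).PosDef := by
  have hMT : Mᵀ = M := (by simpa using hM.1 : M.IsSymm).eq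
  refine Matrix.PosDef.of_dotProduct_mulVec_pos ?_ ?_
  · have : (Wᵀ * M * W)ᵀ = Wᵀ * M * W := by
      rw [transpose_mul, transpose_mul, transpose_transpose, hMT, Matrix.mul_assoc]
    rw [Matrix.IsHermitian, conjTranspose]
    simpa [show (⇑(starRingEnd ℝ) : ℝ → ℝ) = id from funext fun _ => star_trivial _] using this
  · intro x hx
    have hWx : W *ᵥ x ≠ 0 := by
      intro h
      exact hx (hWi (by simpa using h))
    have := hM.dotProduct_mulVec_pos hWx
    simpa [Matrix.mul_assoc, ← mulVec_mulVec, dotProduct_mulVec, vecMul_transpose, star_trivial] using this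

lemma winj {n r : ℕ} (P21 : Matrix (Fin n) (Fin r) ℝ) (hP21 : P21.rank = r)
    (P31 : Matrix (Fin r) (Fin r) ℝ) (hP31 : P31.PosDef) :
    Function.Injective (P21 * P31⁻¹).mulVec := by
  have h21 : Function.Injective P21.mulVec := by
    have h1 : Module.finrank ℝ (LinearMap.range P21.mulVecLin)
        + Module.finrank ℝ (LinearMap.ker P21.mulVecLin) = r := by
      simpa using LinearMap.finrank_range_add_finrank_ker P21.mulVecLin
    have h2 : Module.finrank ℝ (LinearMap.ker P21.mulVecLin) = 0 := by
      have : Matrix.rank P21 = Module.finrank ℝ (LinearMap.range P21.mulVecLin) := rfl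
      omega
    have h3 : LinearMap.ker P21.mulVecLin = ⊥ := Submodule.finrank_eq_zero.mp h2
    have := LinearMap.ker_eq_bot.mp h3
    exact this
  have h31 : Function.Injective (P31⁻¹).mulVec := by
    rw [mulVec_injective_iff_isUnit, Matrix.isUnit_iff_isUnit_det, Matrix.det_nonsing_inv]
    exact isUnit_iff_ne_zero.mpr (by simpa using ne_of_gt hP31.det_pos)
  intro x y h
  apply h31
  apply h21
  simpa [← mulVec_mulVec] using h

lemma hurwitz_part {r : ℕ} {Dr Kr : Matrix (Fin r) (Fin r) ℝ}
    (hDr : Dr.PosDef) (hKr : Kr.PosDef) :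
    ∀ μ ∈ spectrum ℂ ((fromBlocks (0 : Matrix (Fin r) (Fin r) ℝ) 1 (-Kr) (-Dr)).map
      Complex.ofReal), μ.re < 0 := by
  intro μ hμ
  rw [← AlgEquiv.spectrum_eq (Matrix.toLinAlgEquiv' (R := ℂ) (n := Fin r ⊕ Fin r)),
    ← Module.End.hasEigenvalue_iff_mem_spectrum] at hμ
  obtain ⟨v, hv⟩ := hμ.exists_hasEigenvector
  set K' := Kr.map (Complex.ofReal) with hK'
  set D' := Dr.map (Complex.ofReal) with hD'
  have heq : ((fromBlocks (0 : Matrix (Fin r) (Fin r) ℝ) 1 (-Kr) (-Dr)).map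
      Complex.ofReal) *ᵥ v = μ • v := by
    have := hv.apply_eq_smul
    simpa [Matrix.toLinAlgEquiv'_apply, Matrix.toLin'_apply] using this
  set x : Fin r → ℂ := fun i => v (Sum.inl i) with hx
  set y : Fin r → ℂ := fun i => v (Sum.inr i) with hy
  have hv' : v = Sum.elim x y := by funext s; cases s <;> rfl
  have hblk : ((fromBlocks (0 : Matrix (Fin r) (Fin r) ℝ) 1 (-Kr) (-Dr)).map Complex.ofReal)
      = fromBlocks 0 1 (-K') (-D') := by
    ext (i | i) (j | j) <;> simp [fromBlocks, Matrix.one_apply, apply_ite, hK', hD']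
  rw [hblk, hv', fromBlocks_mulVec] at heq
  have h1 : (0 : Matrix (Fin r) (Fin r) ℂ) *ᵥ x + 1 *ᵥ y = μ • x := by
    funext i; exact congrFun heq (Sum.inl i)
  have h2 : (-K') *ᵥ x + (-D') *ᵥ y = μ • y := by
    funext i; exact congrFun heq (Sum.inr i)
  have hyx : y = μ • x := by simpa using h1
  have hx0 : x ≠ 0 := by
    intro h
    apply hv.2
    rw [hv', h, hyx, h]
    funext s; cases s <;> simp
  rw [hyx] at h2
  obtain ⟨kc, hkc, hkce⟩ := cplx_pos' Kr hKr hx0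
  obtain ⟨dc, hdc, hdce⟩ := cplx_pos' Dr hDr hx0
  obtain ⟨nc, hnc, hnce⟩ := cplx_pos' 1 Matrix.PosDef.one hx0
  have hnce' : star x ⬝ᵥ x = (nc : ℂ) := by
    rw [← hnce]
    congr 1
    rw [Matrix.map_one _ (by simp) (by simp), one_mulVec]
  have E : -(kc : ℂ) - μ * dc = μ * (μ * nc) := by
    have := congrArg (fun w => star x ⬝ᵥ w) h2
    rw [← hK'] at hkce; rw [← hD'] at hdce
    simpa [dotProduct_add, neg_mulVec, mulVec_smul, dotProduct_neg, dotProduct_smul,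
      smul_eq_mul, hkce, hdce, hnce', ← hK', ← hD', mul_comm, mul_left_comm, sub_eq_add_neg] using this
  have hre := congrArg Complex.re E
  have him := congrArg Complex.im E
  simp only [Complex.sub_re, Complex.sub_im, Complex.neg_re, Complex.neg_im, Complex.mul_re,
    Complex.mul_im, Complex.ofReal_re, Complex.ofReal_im] at hre him
  by_contra h
  push_neg at h
  have hq : μ.im = 0 := by
    have hfac : μ.im * (2 * nc * μ.re + dc) = 0 := by linear_combination -him
    rcases mul_eq_zero.mp hfac with h' | h'
    · exact h'
    · nlinarith
  rw [hq] at hre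
  nlinarith [mul_nonneg h h, mul_pos hnc (mul_pos hdc hkc)]

/-- A real square matrix is Hurwitz if every complex eigenvalue has negative real part. -/
def IsHurwitz {m : Type*} [Fintype m] [DecidableEq m] (A : Matrix m m ℝ) : Prop :=
  ∀ μ ∈ spectrum ℂ (A.map Complex.ofReal), μ.re < 0

/-- Corollary 2: with `W = P21 P31⁻¹`, the reduced matrices
`D̂r = Wᵀ D W` and `K̂r = Wᵀ K W` are symmetric positive definite, and the reduced
second-order model is asymptotically stable. -/
theorem stmt3 {n r : ℕ} (hrn : r ≤ n)
    (D K : Matrix (Fin n) (Fin n) ℝ) (hD : D.PosDef) (hK : K.PosDef)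
    (P21 : Matrix (Fin n) (Fin r) ℝ) (hP21 : P21.rank = r)
    (P31 : Matrix (Fin r) (Fin r) ℝ) (hP31 : P31.PosDef)
    (W : Matrix (Fin n) (Fin r) ℝ) (hW : W = P21 * P31⁻¹)
    (Dr Kr : Matrix (Fin r) (Fin r) ℝ)
    (hDr : Dr = Wᵀ * D * W) (hKr : Kr = Wᵀ * K * W) :
    Dr.PosDef ∧ Kr.PosDef ∧
    IsHurwitz (Matrix.fromBlocks (0 : Matrix (Fin r) (Fin r) ℝ)
      (1 : Matrix (Fin r) (Fin r) ℝ) (-Kr) (-Dr)) := by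
  have hWi : Function.Injective W.mulVec := by
    rw [hW]; exact winj P21 hP21 P31 hP31
  have hDrP : Dr.PosDef := hDr ▸ posdef_conj hD hWi
  have hKrP : Kr.PosDef := hKr ▸ posdef_conj hK hWi
  exact ⟨hDrP, hKrP, hurwitz_part hDrP hKrP⟩
end

section
/- Let r ≥ 3, let T ∈ ℝ^{(r−1)×(r−1)} satisfy T Tᵀ = I_{r−1} − (1/r) 1_{r−1} 1_{r−1}ᵀ, and suppose there is an integer m with 1 ≤ m ≤ r−2 such that T_{ij} T_{sj} ≤ 0 for all i ≠ s and j ∈ {1,…,r−m−1}, and T_{ij} T_{sj} ≥ 0 for all i ≠ s and j ∈ {r−m,…,r−1}. Let μ_1 ≥ μ_2 ≥ ⋯ ≥ μ_{r−1} > 0. Then for all i ≠ s in {1,…,r−1}: Σ_{j=1}^{r−1} μ_j T_{ij} T_{sj} ≤ −(1/r) μ_{r−m} < 0. -/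
open Matrix

/-- with `r = k + 1 ≥ 3`, `T Tᵀ = I − (1/r) 1 1ᵀ`, the sign conditions on `T`,
and `μ₁ ≥ ⋯ ≥ μ_{r−1} > 0`, the off-diagonal sums satisfy
`Σⱼ μⱼ Tᵢⱼ Tₛⱼ ≤ −(1/r) μ_{r−m} < 0` for all `i ≠ s`. -/
theorem stmt9 (k : ℕ) (hk : 2 ≤ k)
    (T : Matrix (Fin k) (Fin k) ℝ)
    (hTT : T * Tᵀ =
      (1 : Matrix (Fin k) (Fin k) ℝ) - (((k : ℝ) + 1)⁻¹) • Matrix.of fun _ _ => (1 : ℝ))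
    (m : ℕ) (hm1 : 1 ≤ m) (hm2 : m ≤ k - 1)
    (hsign1 : ∀ i s : Fin k, i ≠ s → ∀ j : Fin k, (j : ℕ) < k - m → T i j * T s j ≤ 0)
    (hsign2 : ∀ i s : Fin k, i ≠ s → ∀ j : Fin k, k - m ≤ (j : ℕ) → 0 ≤ T i j * T s j)
    (μ : Fin k → ℝ) (hmono : Antitone μ) (hpos : ∀ j, 0 < μ j) :
    ∀ i s : Fin k, i ≠ s →
      (∑ j, μ j * (T i j * T s j)) ≤ -(((k : ℝ) + 1)⁻¹ * μ ⟨k - m, by omega⟩) ∧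
      -(((k : ℝ) + 1)⁻¹ * μ ⟨k - m, by omega⟩) < 0 := by
  intro i s his
  set p : Fin k := ⟨k - m, by omega⟩ with hp
  have hsum : ∑ j, T i j * T s j = -((k : ℝ) + 1)⁻¹ := by
    have h := congrFun (congrFun hTT i) s
    simp [Matrix.mul_apply, Matrix.one_apply, his, Matrix.sub_apply,
      Matrix.smul_apply, Matrix.transpose_apply, smul_eq_mul] at h
    simpa using h
  have hstep : ∑ j, μ j * (T i j * T s j) ≤ ∑ j, μ p * (T i j * T s j) := by
    apply Finset.sum_le_sum
    intro j _
    by_cases hj : (j : ℕ) < k - m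
    · have ha : T i j * T s j ≤ 0 := hsign1 i s his j hj
      have hμ : μ p ≤ μ j := hmono (by simp [hp, Fin.le_def]; omega)
      exact mul_le_mul_of_nonpos_right hμ ha
    · have ha : 0 ≤ T i j * T s j := hsign2 i s his j (by omega)
      have hμ : μ j ≤ μ p := hmono (by simp [hp, Fin.le_def]; omega)
      exact mul_le_mul_of_nonneg_right hμ ha
  have heq : ∑ j, μ p * (T i j * T s j) = -(((k : ℝ) + 1)⁻¹ * μ p) := by
    rw [← Finset.mul_sum, hsum]; ring
  have hkpos : (0 : ℝ) < ((k : ℝ) + 1)⁻¹ := by positivity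
  constructor
  · exact heq ▸ hstep
  · have := hpos p
    nlinarith
end

section
/- Let r ≥ 2 and let λ_1 ≥ λ_2 ≥ ⋯ ≥ λ_{r−1} > 0 be real numbers. Then there exists a symmetric matrix L ∈ ℝ^{r×r} with L_{ij} ≤ 0 for all i ≠ j and L·1_r = 0 whose multiset of eigenvalues (with multiplicity) is exactly {0, λ_1, λ_2, …, λ_{r−1}}. -/
open Matrix

open Finset
open Finset in
/-- off-diagonal column pattern of the Helmert matrix (unnormalized). -/
def vC (m i : ℕ) : ℝ := if i < m then 1 else if i = m then -(m:ℝ) else 0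

lemma vC_of_gt {m i : ℕ} (h : m < i) : vC m i = 0 := by
  simp [vC, Nat.lt_asymm h, (Nat.ne_of_gt h)]

open Finset in
lemma sum_split (f : ℕ → ℝ) (c n : ℕ) (h : c < n) (h0 : ∀ i, c < i → f i = 0) :
    ∑ i ∈ range n, f i = (∑ i ∈ range c, f i) + f c := by
  rw [← Finset.sum_range_succ]
  symm
  apply Finset.sum_subset (Finset.range_subset_range.2 h)
  intro x hx hx'
  exact h0 x (by simpa using hx')

open Finset in
lemma sum_vC {d n : ℕ} (hd : d < n) : ∑ i ∈ range n, vC d i = 0 := by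
  rw [sum_split _ d n hd (fun i hi => vC_of_gt hi)]
  have : ∑ i ∈ range d, vC d i = ∑ i ∈ range d, (1:ℝ) :=
    Finset.sum_congr rfl (fun i hi => by simp [vC, Finset.mem_range.1 hi])
  rw [this]
  simp [vC]

open Finset in
lemma sum_vC_sq {d n : ℕ} (hd : d < n) :
    ∑ i ∈ range n, vC d i * vC d i = d + d * d := by
  rw [sum_split _ d n hd (fun i hi => by rw [vC_of_gt hi]; ring)]
  have : ∑ i ∈ range d, vC d i * vC d i = ∑ i ∈ range d, (1:ℝ) :=
    Finset.sum_congr rfl (fun i hi => by simp [vC, Finset.mem_range.1 hi])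
  rw [this]
  simp [vC]

lemma vC_mul_lt {c d : ℕ} (h : c < d) (i : ℕ) : vC c i * vC d i = vC c i := by
  rcases lt_trichotomy i c with hi | hi | hi
  · simp [vC, hi, hi.trans h]
  · subst hi; simp [vC, h, Nat.lt_irrefl]
  · simp [vC_of_gt hi]

lemma vC_mul_pair {i j : ℕ} (hij : i < j) (m : ℕ) :
    vC m i * vC m j = if j < m then 1 else if j = m then -(m:ℝ) else 0 := by
  rcases lt_trichotomy j m with hj | hj | hj
  · simp [vC, hj, hij.trans hj]
  · subst hj; simp [vC, hij, Nat.lt_irrefl]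
  · rw [vC_of_gt hj, mul_zero]
    simp [Nat.lt_asymm hj, Nat.ne_of_gt hj]

open Matrix Finset

section helmertdefs
noncomputable def hel (n : ℕ) : Matrix (Fin n) (Fin n) ℝ := fun i c =>
  if (c : ℕ) = 0 then 1 / Real.sqrt n
  else vC c i / Real.sqrt ((c : ℕ) * ((c : ℕ) + 1))
end helmertdefs


lemma hel_ip {n : ℕ} (hn : 0 < n) (c d : Fin n) (hcd : (c:ℕ) ≤ (d:ℕ)) :
    ∑ e : Fin n, hel n e c * hel n e d = if c = d then 1 else 0 := by
  have hnR : (0:ℝ) < n := by exact_mod_cast hn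
  rcases Nat.eq_zero_or_pos (c:ℕ) with hc | hc
  · rcases Nat.eq_zero_or_pos (d:ℕ) with hd | hd
    · -- both zero
      have hcd' : c = d := Fin.ext (by omega)
      subst hcd'
      simp only [hel, hc, if_pos, if_true]
      rw [Finset.sum_const, Finset.card_univ, Fintype.card_fin]
      rw [div_mul_div_comm, one_mul, Real.mul_self_sqrt hnR.le]
      simp [hnR.ne']
    · -- c = 0 < d
      have hne : c ≠ d := fun h => by omega
      simp only [hel, hc, if_true, Nat.pos_iff_ne_zero.1 hd, if_false, if_neg hne, eq_self_iff_true]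
      have : ∀ e : Fin n, (1 / Real.sqrt n) * (vC d e / Real.sqrt ((d:ℕ) * ((d:ℕ)+1)))
          = vC d e * ((1 / Real.sqrt n) / Real.sqrt ((d:ℕ) * ((d:ℕ)+1))) := fun e => by ring
      rw [Finset.sum_congr rfl (fun e _ => this e), ← Finset.sum_mul]
      rw [Fin.sum_univ_eq_sum_range (fun i => vC d i) n, sum_vC d.isLt, zero_mul]
  · rcases eq_or_lt_of_le hcd with hcd' | hcd'
    · -- c = d ≥ 1
      have hcd'' : c = d := Fin.ext hcd'
      subst hcd''
      simp only [hel, Nat.pos_iff_ne_zero.1 hc, if_false, if_true, eq_self_iff_true]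
      have hx : (0:ℝ) < (c:ℕ) * ((c:ℕ)+1) := by positivity
      have : ∀ e : Fin n, (vC c e / Real.sqrt ((c:ℕ) * ((c:ℕ)+1))) * (vC c e / Real.sqrt ((c:ℕ) * ((c:ℕ)+1)))
          = (vC c e * vC c e) * (1 / ((c:ℕ) * ((c:ℕ)+1))) := fun e => by
        rw [div_mul_div_comm, Real.mul_self_sqrt hx.le]; ring
      rw [Finset.sum_congr rfl (fun e _ => this e), ← Finset.sum_mul]
      rw [Fin.sum_univ_eq_sum_range (fun i => vC c i * vC c i) n, sum_vC_sq c.isLt]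
      rw [mul_one_div, div_eq_one_iff_eq hx.ne']
      ring
    · -- 1 ≤ c < d
      have hne : c ≠ d := fun h => by omega
      have hd : (d:ℕ) ≠ 0 := by omega
      simp only [hel, Nat.pos_iff_ne_zero.1 hc, hd, if_false, if_neg hne]
      have : ∀ e : Fin n, (vC c e / Real.sqrt ((c:ℕ) * ((c:ℕ)+1))) * (vC d e / Real.sqrt ((d:ℕ) * ((d:ℕ)+1)))
          = vC c e * (1 / (Real.sqrt ((c:ℕ) * ((c:ℕ)+1)) * Real.sqrt ((d:ℕ) * ((d:ℕ)+1)))) := fun e => by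
        rw [div_mul_div_comm, vC_mul_lt hcd']; ring
      rw [Finset.sum_congr rfl (fun e _ => this e), ← Finset.sum_mul]
      rw [Fin.sum_univ_eq_sum_range (fun i => vC c i) n, sum_vC c.isLt, zero_mul]

lemma hel_orth {n : ℕ} (hn : 0 < n) : hel n * (hel n)ᵀ = 1 := by
  rw [mul_eq_one_comm]
  ext c d
  rw [Matrix.mul_apply]
  simp only [Matrix.transpose_apply, Matrix.one_apply]
  rcases le_or_gt (c:ℕ) (d:ℕ) with h | h
  · exact hel_ip hn c d h
  · have := hel_ip hn d c h.le
    rw [Finset.sum_congr rfl (fun e _ => mul_comm (hel n e c) (hel n e d)), this]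
    have : c ≠ d := fun hh => by omega
    simp [this, (Ne.symm this)]

open Matrix Finset

lemma tail_bound (g : ℕ → ℝ) (A : ℝ) (q : ℕ) (_hA0 : 0 ≤ A) :
    ∀ k, q < k → (∀ c, q < c → c < k → g c ≤ A) →
    ∑ c ∈ Finset.Ico (q+1) k, g c / (((c:ℝ)+1)*((c:ℝ)+2)) ≤ A * (1/((q:ℝ)+2) - 1/((k:ℝ)+1)) := by
  intro k
  induction k with
  | zero => intro h; omega
  | succ k ih =>
    intro hk hg
    rcases Nat.lt_or_ge q k with hqk | hqk
    · rw [Finset.sum_Ico_succ_top (by omega : q + 1 ≤ k)]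
      have h1 : ∑ c ∈ Finset.Ico (q+1) k, g c / (((c:ℝ)+1)*((c:ℝ)+2))
          ≤ A * (1/((q:ℝ)+2) - 1/((k:ℝ)+1)) := ih hqk (fun c h1 h2 => hg c h1 (by omega))
      have h2 : g k / (((k:ℝ)+1)*((k:ℝ)+2)) ≤ A * (1/((k:ℝ)+1) - 1/((k:ℝ)+2)) := by
        have heq : A * (1/((k:ℝ)+1) - 1/((k:ℝ)+2)) = A / (((k:ℝ)+1)*((k:ℝ)+2)) := by
          field_simp; ring
        rw [heq]
        gcongr
        exact hg k hqk (by omega)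
      calc ∑ c ∈ Finset.Ico (q+1) k, g c / (((c:ℝ)+1)*((c:ℝ)+2)) + g k / (((k:ℝ)+1)*((k:ℝ)+2))
          ≤ A * (1/((q:ℝ)+2) - 1/((k:ℝ)+1)) + A * (1/((k:ℝ)+1) - 1/((k:ℝ)+2)) :=
              add_le_add h1 h2
        _ = A * (1/((q:ℝ)+2) - 1/(((k+1:ℕ):ℝ)+1)) := by push_cast; ring
    · have hq : q = k := by omega
      subst hq
      rw [Finset.Ico_self, Finset.sum_empty]
      have : ((q+1:ℕ):ℝ) + 1 = (q:ℝ) + 2 := by push_cast; ring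
      rw [this]
      simp

open Matrix Finset


lemma hel_succ {n : ℕ} (i : Fin (n+1)) (c : Fin n) :
    hel (n+1) i c.succ = vC ((c:ℕ)+1) (i:ℕ) / Real.sqrt ((((c:ℕ):ℝ)+1) * (((c:ℕ):ℝ)+2)) := by
  have h : ((c.succ : ℕ) : ℝ) = ((c:ℕ):ℝ) + 1 := by
    rw [Fin.val_succ]; push_cast; ring
  simp only [hel, Fin.val_succ, Nat.succ_ne_zero, if_false, h]
  norm_num
  ring_nf

lemma hel_col_sum {n : ℕ} (c : Fin n) :
    ∑ i : Fin (n+1), hel (n+1) i c.succ = 0 := by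
  have hS : ∀ i : Fin (n+1), hel (n+1) i c.succ
      = vC ((c:ℕ)+1) (i:ℕ) * (1 / Real.sqrt ((((c:ℕ):ℝ)+1) * (((c:ℕ):ℝ)+2))) := fun i => by
    rw [hel_succ]; ring
  rw [Finset.sum_congr rfl (fun i _ => hS i), ← Finset.sum_mul]
  rw [Fin.sum_univ_eq_sum_range (fun i => vC ((c:ℕ)+1) i) (n+1),
    sum_vC (by omega : (c:ℕ)+1 < n+1), zero_mul]

/-- with `r = k + 1 ≥ 2`, for any prescribed `λ₁ ≥ ⋯ ≥ λ_{r−1} > 0` there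
is a symmetric matrix `L` with nonpositive off-diagonal entries and `L 1 = 0` (i.e. an
undirected weighted graph Laplacian) whose eigenvalues, with multiplicity, are exactly
`{0, λ₁, …, λ_{r−1}}`. -/
theorem stmt16 (k : ℕ) (hk : 1 ≤ k)
    (lam : Fin k → ℝ) (hmono : Antitone lam) (hpos : ∀ i, 0 < lam i) :
    ∃ L : Matrix (Fin (k + 1)) (Fin (k + 1)) ℝ,
      L.IsSymm ∧
      (∀ i j, i ≠ j → L i j ≤ 0) ∧
      L.mulVec (fun _ => (1 : ℝ)) = 0 ∧
      ∃ U : Matrix (Fin (k + 1)) (Fin (k + 1)) ℝ,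
        U * Uᵀ = 1 ∧ L = U * Matrix.diagonal (Fin.cons 0 lam) * Uᵀ := by
  set U : Matrix (Fin (k+1)) (Fin (k+1)) ℝ := hel (k+1) with hU
  set D : Matrix (Fin (k+1)) (Fin (k+1)) ℝ := Matrix.diagonal (Fin.cons 0 lam) with hD
  refine ⟨U * D * Uᵀ, ?_, ?_, ?_, U, hel_orth (by omega), rfl⟩
  · -- symmetry
    rw [Matrix.IsSymm, Matrix.transpose_mul, Matrix.transpose_mul, Matrix.transpose_transpose,
      hD, Matrix.diagonal_transpose, mul_assoc]
  · -- off-diagonal entries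
    -- generic entry formula
    have hentry : ∀ i j : Fin (k+1), (U * D * Uᵀ) i j
        = ∑ c : Fin (k+1), (Fin.cons 0 lam : Fin (k+1) → ℝ) c * (U i c * U j c) := by
      intro i j
      rw [Matrix.mul_apply]
      refine Finset.sum_congr rfl (fun c _ => ?_)
      rw [Matrix.mul_diagonal, Matrix.transpose_apply]
      ring
    -- nonpositivity for i < j
    have hmain : ∀ i j : Fin (k+1), (i:ℕ) < (j:ℕ) →
        ∑ c : Fin (k+1), (Fin.cons 0 lam : Fin (k+1) → ℝ) c * (U i c * U j c) ≤ 0 := by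
      intro i j hij
      obtain ⟨q, hq⟩ : ∃ q, (j:ℕ) = q + 1 := ⟨(j:ℕ) - 1, by omega⟩
      have hqk : q < k := by have := j.isLt; omega
      set g : ℕ → ℝ := fun m => if h : m < k then lam ⟨m, h⟩ else 0 with hg
      have hterm : ∀ c : Fin k, (Fin.cons 0 lam : Fin (k+1) → ℝ) c.succ * (U i c.succ * U j c.succ)
          = g (c:ℕ) * ((if q < (c:ℕ) then 1 else if q = (c:ℕ) then -(((c:ℕ):ℝ)+1) else 0)
              / ((((c:ℕ):ℝ)+1)*(((c:ℕ):ℝ)+2))) := by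
        intro c
        rw [Fin.cons_succ, hU, hel_succ i c, hel_succ j c]
        rw [div_mul_div_comm, Real.mul_self_sqrt (by positivity), vC_mul_pair hij ((c:ℕ)+1)]
        have h1 : (if (j:ℕ) < (c:ℕ)+1 then (1:ℝ) else if (j:ℕ) = (c:ℕ)+1 then -(((c:ℕ)+1 : ℕ):ℝ) else 0)
            = (if q < (c:ℕ) then 1 else if q = (c:ℕ) then -(((c:ℕ):ℝ)+1) else 0) := by
          rw [hq]
          push_cast
          split_ifs <;> first | rfl | omega
        rw [h1]
        have h2 : lam c = g (c:ℕ) := by simp [hg, c.isLt]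
        rw [h2]
      rw [Fin.sum_univ_succ, Fin.cons_zero, zero_mul, zero_add]
      rw [Finset.sum_congr rfl (fun c _ => hterm c)]
      rw [Fin.sum_univ_eq_sum_range (fun c => g c * ((if q < c then 1 else if q = c then -((c:ℝ)+1) else 0)
              / (((c:ℝ)+1)*((c:ℝ)+2)))) k]
      -- split the sum at q
      rw [Finset.range_eq_Ico, ← Finset.sum_Ico_consecutive _ (Nat.zero_le (q+1)) (by omega : q+1 ≤ k)]
      rw [← Finset.range_eq_Ico]
      have hgq : g q = lam ⟨q, hqk⟩ := by simp [hg, hqk]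
      have hgq0 : 0 ≤ g q := by rw [hgq]; exact (hpos _).le
      have hfirst : ∑ c ∈ Finset.range (q+1),
          g c * ((if q < c then 1 else if q = c then -((c:ℝ)+1) else 0) / (((c:ℝ)+1)*((c:ℝ)+2)))
          = g q * (-((q:ℝ)+1) / (((q:ℝ)+1)*((q:ℝ)+2))) := by
        rw [Finset.sum_range_succ]
        rw [Finset.sum_eq_zero (fun c hc => ?_), zero_add]
        · simp
        · have hc' : c < q := Finset.mem_range.1 hc
          have h1 : ¬ q < c := by omega
          have h2 : ¬ q = c := by omega
          rw [if_neg h1, if_neg h2, zero_div, mul_zero]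
      have hsecond : ∑ c ∈ Finset.Ico (q+1) k,
          g c * ((if q < c then 1 else if q = c then -((c:ℝ)+1) else 0) / (((c:ℝ)+1)*((c:ℝ)+2)))
          = ∑ c ∈ Finset.Ico (q+1) k, g c / (((c:ℝ)+1)*((c:ℝ)+2)) := by
        refine Finset.sum_congr rfl (fun c hc => ?_)
        have hcq : q < c := by
          have := Finset.mem_Ico.1 hc
          omega
        rw [if_pos hcq]; ring
      have htail := tail_bound g (g q) q hgq0 k hqk (fun c h1 h2 => by
        have hgc : g c = lam ⟨c, h2⟩ := by simp [hg, h2]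
        rw [hgc, hgq]
        exact hmono (Fin.mk_le_mk.mpr h1.le))
      rw [hfirst, hsecond]
      have hq1 : ((q:ℝ)+1) ≠ 0 := by positivity
      have heq : g q * (-((q:ℝ)+1) / (((q:ℝ)+1)*((q:ℝ)+2))) + g q * (1/((q:ℝ)+2) - 1/((k:ℝ)+1))
          = -(g q * (1/((k:ℝ)+1))) := by
        field_simp
        ring
      have hfin : (0:ℝ) ≤ g q * (1/((k:ℝ)+1)) := mul_nonneg hgq0 (by positivity)
      linarith [htail]
    intro i j hij
    rcases Nat.lt_or_ge (i:ℕ) (j:ℕ) with h | h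
    · rw [hentry i j]; exact hmain i j h
    · have h' : (j:ℕ) < (i:ℕ) := by
        rcases Nat.lt_or_ge (j:ℕ) (i:ℕ) with h' | h'
        · exact h'
        · exact absurd (Fin.ext (le_antisymm h h')) (Ne.symm hij)
      rw [hentry i j]
      have : ∑ c : Fin (k+1), (Fin.cons 0 lam : Fin (k+1) → ℝ) c * (U i c * U j c)
          = ∑ c : Fin (k+1), (Fin.cons 0 lam : Fin (k+1) → ℝ) c * (U j c * U i c) :=
        Finset.sum_congr rfl (fun c _ => by ring)
      rw [this]
      exact hmain j i h'
  · -- mulVec ones = 0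
    have hw : ∀ c : Fin (k+1), (Uᵀ.mulVec (fun _ => (1:ℝ))) c = ∑ e : Fin (k+1), U e c := by
      intro c
      simp [Matrix.mulVec, dotProduct, Matrix.transpose_apply]
    have hDw : D.mulVec (Uᵀ.mulVec (fun _ => (1:ℝ))) = 0 := by
      funext c
      rw [hD, Matrix.mulVec_diagonal]
      refine Fin.cases ?_ ?_ c
      · rw [Fin.cons_zero, zero_mul]; rfl
      · intro c'
        rw [Fin.cons_succ, hw, hU, hel_col_sum c', mul_zero]; rfl
    rw [← Matrix.mulVec_mulVec, ← Matrix.mulVec_mulVec, hDw, Matrix.mulVec_zero]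
end
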